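/- Fix an integer n with |n| ≥ 2(1+ηT) and let β : [0,T] → ℝ be Lipschitz with constant η and |β(0)| ≤ 1. Consider the ODE system d/dt (a, b) = (i(n+β(t))³ b, i(n+β(t)) a) on ℂ². Then any solution satisfies, for the norm |(a,b)|ₙ² = |a|² + (1+n²)|b|², the bound |(a(t), b(t))|ₙ ≤ 6 e^{2ηT/|n|} |(a(0), b(0))|ₙ for 0 ≤ t ≤ T. -/

import Mathlib

open NNReal Set Filter Topology

private lemma stmt14_aux1 (m : ℝ) (u v : ℂ) :
    ((inner ℝ u (Complex.I*(m:ℂ)^3*v) : ℝ) + inner ℝ (Complex.I*(m:ℂ)^3*v) u)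
    + m^2 * ((inner ℝ v (Complex.I*(m:ℂ)*u) : ℝ) + inner ℝ (Complex.I*(m:ℂ)*u) v) = 0 := by
  simp [Complex.inner, Complex.mul_re, Complex.mul_im, ← Complex.ofReal_pow]
  ring

set_option maxHeartbeats 1000000 in
/-- Gronwall-type Fourier-mode estimate for the linearized elastica evolution:
    for |n| ≥ 2(1+ηT), solutions of a' = i(n+β)³ b, b' = i(n+β) a satisfy
    |(a(t),b(t))|ₙ ≤ 6 e^{2ηT/|n|} |(a(0),b(0))|ₙ. -/
theorem stmt14 (T : ℝ) (hT : 0 < T) (η : ℝ≥0) (β : ℝ → ℝ)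
    (hβ : LipschitzOnWith η β (Set.Icc 0 T)) (hβ0 : |β 0| ≤ 1)
    (n : ℤ) (hn : 2 * (1 + (η : ℝ) * T) ≤ |(n : ℝ)|)
    (a b : ℝ → ℂ)
    (ha : ∀ t ∈ Set.Icc (0:ℝ) T,
      HasDerivAt a (Complex.I * ((n : ℂ) + (β t : ℂ)) ^ 3 * b t) t)
    (hb : ∀ t ∈ Set.Icc (0:ℝ) T,
      HasDerivAt b (Complex.I * ((n : ℂ) + (β t : ℂ)) * a t) t) :
    ∀ t ∈ Set.Icc (0:ℝ) T,
      Real.sqrt (‖a t‖ ^ 2 + (1 + (n : ℝ) ^ 2) * ‖b t‖ ^ 2) ≤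
        6 * Real.exp (2 * (η : ℝ) * T / |(n : ℝ)|) *
          Real.sqrt (‖a 0‖ ^ 2 + (1 + (n : ℝ) ^ 2) * ‖b 0‖ ^ 2) := by
  have hη : (0:ℝ) ≤ η := η.2
  have hηT : (0:ℝ) ≤ (η:ℝ)*T := mul_nonneg hη hT.le
  have hn2 : (2:ℝ) ≤ |(n:ℝ)| := by linarith
  have hn0 : (0:ℝ) < |(n:ℝ)| := by linarith
  have h0I : (0:ℝ) ∈ Icc (0:ℝ) T := ⟨le_rfl, hT.le⟩
  -- bound on β on [0,T]
  have hβb : ∀ t ∈ Icc (0:ℝ) T, |β t| ≤ |(n:ℝ)|/2 := by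
    intro t ht
    have hd := hβ.dist_le_mul t ht 0 h0I
    rw [Real.dist_eq, Real.dist_eq] at hd
    have h1 : |β t - β 0| ≤ (η:ℝ) * T := by
      have h2 : |t - 0| ≤ T := by rw [sub_zero, abs_of_nonneg ht.1]; exact ht.2
      calc |β t - β 0| ≤ (η:ℝ) * |t - 0| := hd
        _ ≤ (η:ℝ) * T := by nlinarith [abs_nonneg (t - 0)]
    have h3 := abs_sub_abs_le_abs_sub (β t) (β 0)
    linarith
  -- bounds on |n + β t|
  have hml : ∀ t ∈ Icc (0:ℝ) T, |(n:ℝ)|/2 ≤ |(n:ℝ) + β t| := by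
    intro t ht
    have h := hβb t ht
    rcases abs_le.mp h with ⟨h5, h6⟩
    rcases abs_cases ((n:ℝ)) with ⟨h1, h2⟩ | ⟨h1, h2⟩ <;>
      rcases abs_cases ((n:ℝ) + β t) with ⟨h3, h4⟩ | ⟨h3, h4⟩ <;> linarith
  have hmu : ∀ t ∈ Icc (0:ℝ) T, |(n:ℝ) + β t| ≤ 3/2 * |(n:ℝ)| := by
    intro t ht
    have h := hβb t ht
    calc |(n:ℝ) + β t| ≤ |(n:ℝ)| + |β t| := abs_add_le _ _
      _ ≤ 3/2 * |(n:ℝ)| := by linarith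
  have hsq1 : ∀ t ∈ Icc (0:ℝ) T, (n:ℝ)^2/4 ≤ ((n:ℝ) + β t)^2 := by
    intro t ht
    have h := hml t ht
    have h2 := mul_le_mul h h (by positivity) (abs_nonneg _)
    nlinarith [sq_abs ((n:ℝ) + β t), sq_abs ((n:ℝ))]
  have hsq2 : ∀ t ∈ Icc (0:ℝ) T, ((n:ℝ) + β t)^2 ≤ 9/4 * (n:ℝ)^2 := by
    intro t ht
    have h := hmu t ht
    have h2 := mul_le_mul h h (abs_nonneg _) (by positivity)
    nlinarith [sq_abs ((n:ℝ) + β t), sq_abs ((n:ℝ))]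
  set K : ℝ := 4*(η:ℝ)/|(n:ℝ)| with hK
  set H : ℝ → ℝ := fun t => ‖a t‖^2 + ((n:ℝ) + β t)^2 * ‖b t‖^2 with hH
  have haC : ContinuousOn a (Icc 0 T) := fun t ht => (ha t ht).continuousAt.continuousWithinAt
  have hbC : ContinuousOn b (Icc 0 T) := fun t ht => (hb t ht).continuousAt.continuousWithinAt
  have hβC : ContinuousOn β (Icc 0 T) := hβ.continuousOn
  have hHC : ContinuousOn H (Icc 0 T) :=
    (haC.norm.pow 2).add (((continuousOn_const.add hβC).pow 2).mul (hbC.norm.pow 2))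
  -- the frozen-coefficient energy has zero derivative
  have key : ∀ x ∈ Icc (0:ℝ) T,
      HasDerivAt (fun t => ‖a t‖^2 + ((n:ℝ) + β x)^2 * ‖b t‖^2) 0 x := by
    intro x hx
    have hax := ha x hx
    have hbx := hb x hx
    have h1 : HasDerivAt (fun t => ‖a t‖^2)
        ((inner ℝ (a x) (Complex.I * ((n:ℂ) + (β x:ℂ))^3 * b x) : ℝ)
          + inner ℝ (Complex.I * ((n:ℂ) + (β x:ℂ))^3 * b x) (a x)) x := by
      simpa only [real_inner_self_eq_norm_sq] using hax.inner ℝ hax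
    have h2 : HasDerivAt (fun t => ‖b t‖^2)
        ((inner ℝ (b x) (Complex.I * ((n:ℂ) + (β x:ℂ)) * a x) : ℝ)
          + inner ℝ (Complex.I * ((n:ℂ) + (β x:ℂ)) * a x) (b x)) x := by
      simpa only [real_inner_self_eq_norm_sq] using hbx.inner ℝ hbx
    have h3 := h1.add (h2.const_mul (((n:ℝ) + β x)^2))
    refine h3.congr_deriv ?_
    have hc : ((n:ℂ) + (β x:ℂ)) = (((n:ℝ) + β x : ℝ) : ℂ) := by push_cast; ring
    rw [hc]
    linarith [stmt14_aux1 ((n:ℝ) + β x) (a x) (b x)]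
  -- the liminf condition for Gronwall
  have hf' : ∀ x ∈ Ico (0:ℝ) T, ∀ r, K * H x < r →
      ∃ᶠ z in 𝓝[>] x, (z - x)⁻¹ * (H z - H x) < r := by
    intro x hx r hr
    have hxI : x ∈ Icc (0:ℝ) T := ⟨hx.1, hx.2.le⟩
    set m : ℝ := (n:ℝ) + β x with hm
    set P : ℝ → ℝ := fun t => ‖a t‖^2 + m^2 * ‖b t‖^2 with hP
    have hPd : HasDerivAt P 0 x := key x hxI
    have hle : 𝓝[Ioc x T] x ≤ 𝓝[≠] x :=
      nhdsWithin_mono x (fun z hz => Set.mem_compl_singleton_iff.mpr (ne_of_gt hz.1))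
    have hsub : Ioc x T ⊆ Icc (0:ℝ) T := fun z hz => ⟨le_trans hx.1 hz.1.le, hz.2⟩
    have hle2 : 𝓝[Ioc x T] x ≤ 𝓝[Icc (0:ℝ) T] x := nhdsWithin_mono x hsub
    have t1 : Tendsto (fun z => (z - x)⁻¹ * (P z - P x)) (𝓝[Ioc x T] x) (𝓝 0) := by
      have h := (hasDerivAt_iff_tendsto_slope.mp hPd).mono_left hle
      refine h.congr (fun z => ?_)
      rw [slope_def_field, div_eq_inv_mul]
    have hβx : Tendsto β (𝓝[Ioc x T] x) (𝓝 (β x)) := (hβC x hxI).mono_left hle2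
    have hbt : Tendsto b (𝓝[Ioc x T] x) (𝓝 (b x)) :=
      ((hb x hxI).continuousAt).mono_left nhdsWithin_le_nhds
    have t2 : Tendsto (fun z => (η:ℝ) * ((|(n:ℝ) + β z| + |m|) * ‖b z‖^2))
        (𝓝[Ioc x T] x) (𝓝 ((η:ℝ) * ((|m| + |m|) * ‖b x‖^2))) :=
      tendsto_const_nhds.mul
        ((((tendsto_const_nhds.add hβx).abs).add tendsto_const_nhds).mul ((hbt.norm).pow 2))
    have hLr : (0:ℝ) + (η:ℝ) * ((|m| + |m|) * ‖b x‖^2) < r := by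
      rw [zero_add]
      refine lt_of_le_of_lt ?_ hr
      have h1 : |(n:ℝ)|/2 ≤ |m| := hml x hxI
      have h2 : m^2 * ‖b x‖^2 ≤ H x := by
        have h2a : (0:ℝ) ≤ ‖a x‖^2 := sq_nonneg _
        simp only [hH, hm]; linarith
      have hB : (0:ℝ) ≤ ‖b x‖^2 := sq_nonneg _
      rw [hK, div_mul_eq_mul_div, le_div_iff₀ hn0]
      calc (η:ℝ) * ((|m| + |m|) * ‖b x‖^2) * |(n:ℝ)|
          ≤ (η:ℝ) * ((|m| + |m|) * ‖b x‖^2) * (2 * |m|) := by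
            apply mul_le_mul_of_nonneg_left (by linarith) (by positivity)
        _ = 4*(η:ℝ) * (|m|^2 * ‖b x‖^2) := by ring
        _ = 4*(η:ℝ) * (m^2 * ‖b x‖^2) := by rw [sq_abs]
        _ ≤ 4*(η:ℝ) * H x := by
            apply mul_le_mul_of_nonneg_left h2 (by positivity)
    have hev := (t1.add t2).eventually_lt_const hLr
    have hq : ∀ᶠ z in 𝓝[Ioc x T] x, (z - x)⁻¹ * (H z - H x) < r := by
      filter_upwards [hev, self_mem_nhdsWithin] with z hz hzmem
      refine lt_of_le_of_lt ?_ hz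
      have hzx : 0 < z - x := sub_pos.mpr hzmem.1
      have hzI : z ∈ Icc (0:ℝ) T := hsub hzmem
      have hd : |β z - β x| ≤ (η:ℝ) * (z - x) := by
        have hdd := hβ.dist_le_mul z hzI x hxI
        rw [Real.dist_eq, Real.dist_eq] at hdd
        rwa [abs_of_pos hzx] at hdd
      have hsplit : H z - H x = (P z - P x) + (((n:ℝ) + β z)^2 - m^2) * ‖b z‖^2 := by
        simp only [hH, hP, hm]; ring
      have hterm : (((n:ℝ) + β z)^2 - m^2) * ‖b z‖^2
          ≤ (η:ℝ) * (z - x) * ((|(n:ℝ) + β z| + |m|) * ‖b z‖^2) := by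
        have h1 : ((n:ℝ) + β z)^2 - m^2 ≤ ((η:ℝ) * (z - x)) * (|(n:ℝ) + β z| + |m|) := by
          calc ((n:ℝ) + β z)^2 - m^2 = (β z - β x) * (((n:ℝ) + β z) + m) := by
                rw [hm]; ring
            _ ≤ |(β z - β x) * (((n:ℝ) + β z) + m)| := le_abs_self _
            _ = |β z - β x| * |((n:ℝ) + β z) + m| := abs_mul _ _
            _ ≤ ((η:ℝ) * (z - x)) * (|(n:ℝ) + β z| + |m|) := by
                apply mul_le_mul hd (abs_add_le _ _) (abs_nonneg _) (by positivity)
        calc (((n:ℝ) + β z)^2 - m^2) * ‖b z‖^2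
            ≤ (((η:ℝ) * (z - x)) * (|(n:ℝ) + β z| + |m|)) * ‖b z‖^2 :=
              mul_le_mul_of_nonneg_right h1 (sq_nonneg _)
          _ = (η:ℝ) * (z - x) * ((|(n:ℝ) + β z| + |m|) * ‖b z‖^2) := by ring
      have hstep : (z - x)⁻¹ * ((((n:ℝ) + β z)^2 - m^2) * ‖b z‖^2)
          ≤ (η:ℝ) * ((|(n:ℝ) + β z| + |m|) * ‖b z‖^2) := by
        calc (z - x)⁻¹ * ((((n:ℝ) + β z)^2 - m^2) * ‖b z‖^2)
            ≤ (z - x)⁻¹ * ((η:ℝ) * (z - x) * ((|(n:ℝ) + β z| + |m|) * ‖b z‖^2)) :=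
              mul_le_mul_of_nonneg_left hterm (inv_nonneg.mpr hzx.le)
          _ = ((z - x)⁻¹ * (z - x)) * ((η:ℝ) * ((|(n:ℝ) + β z| + |m|) * ‖b z‖^2)) := by
              ring
          _ = (η:ℝ) * ((|(n:ℝ) + β z| + |m|) * ‖b z‖^2) := by
              rw [inv_mul_cancel₀ (ne_of_gt hzx), one_mul]
      rw [hsplit, mul_add]
      linarith
    haveI := left_nhdsWithin_Ioc_neBot hx.2
    exact (hq.frequently).filter_mono (nhdsWithin_mono x Set.Ioc_subset_Ioi_self)
  have bound : ∀ x ∈ Ico (0:ℝ) T, K * H x ≤ K * H x + 0 := fun x _ => by linarith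
  have main := le_gronwallBound_of_liminf_deriv_right_le (f' := fun x => K * H x)
    hHC hf' (le_refl (H 0)) bound
  -- conclude
  intro t ht
  have hHt := main t ht
  rw [sub_zero, gronwallBound_ε0] at hHt
  set E := Real.exp (2 * (η:ℝ) * T / |(n:ℝ)|) with hE
  have hE1 : (1:ℝ) ≤ E := Real.one_le_exp (by positivity)
  have hEsq : Real.exp (K * t) ≤ E^2 := by
    have h : E^2 = Real.exp (4*(η:ℝ)*T/|(n:ℝ)|) := by
      rw [hE, sq, ← Real.exp_add]; congr 1; ring
    rw [h]
    apply Real.exp_le_exp.mpr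
    rw [hK, div_mul_eq_mul_div]
    gcongr
    exact ht.2
  have h8 : ‖a t‖^2 + (1 + (n:ℝ)^2) * ‖b t‖^2 ≤ 8 * H t := by
    have hs := hsq1 t ht
    have hn4 : (4:ℝ) ≤ (n:ℝ)^2 := by nlinarith [sq_abs ((n:ℝ))]
    simp only [hH]
    nlinarith [mul_le_mul_of_nonneg_right hs (sq_nonneg ‖b t‖),
      mul_le_mul_of_nonneg_right hn4 (sq_nonneg ‖b t‖),
      sq_nonneg ‖a t‖, sq_nonneg ‖b t‖]
  have h9 : H 0 ≤ (9/4) * (‖a 0‖^2 + (1 + (n:ℝ)^2) * ‖b 0‖^2) := by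
    have hs2 := hsq2 0 h0I
    simp only [hH]
    nlinarith [mul_le_mul_of_nonneg_right hs2 (sq_nonneg ‖b 0‖),
      sq_nonneg ‖a 0‖, sq_nonneg ‖b 0‖]
  have hF0 : (0:ℝ) ≤ ‖a 0‖^2 + (1 + (n:ℝ)^2) * ‖b 0‖^2 := by positivity
  have hchain : ‖a t‖^2 + (1 + (n:ℝ)^2) * ‖b t‖^2
      ≤ (6*E)^2 * (‖a 0‖^2 + (1 + (n:ℝ)^2) * ‖b 0‖^2) := by
    have c2 : H 0 * Real.exp (K * t) ≤ ((9/4) * (‖a 0‖^2 + (1 + (n:ℝ)^2) * ‖b 0‖^2)) * E^2 := by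
      apply mul_le_mul h9 hEsq (Real.exp_nonneg _)
      positivity
    have c3 : H t ≤ ((9/4) * (‖a 0‖^2 + (1 + (n:ℝ)^2) * ‖b 0‖^2)) * E^2 := le_trans hHt c2
    have hnn : 0 ≤ (‖a 0‖^2 + (1 + (n:ℝ)^2) * ‖b 0‖^2) * E^2 := mul_nonneg hF0 (sq_nonneg E)
    have hrw : (6*E)^2 * (‖a 0‖^2 + (1 + (n:ℝ)^2) * ‖b 0‖^2)
        = 36 * ((‖a 0‖^2 + (1 + (n:ℝ)^2) * ‖b 0‖^2) * E^2) := by ring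
    rw [hrw]
    clear_value K H E
    linarith
  calc Real.sqrt (‖a t‖^2 + (1 + (n:ℝ)^2) * ‖b t‖^2)
      ≤ Real.sqrt ((6*E)^2 * (‖a 0‖^2 + (1 + (n:ℝ)^2) * ‖b 0‖^2)) := Real.sqrt_le_sqrt hchain
    _ = (6*E) * Real.sqrt (‖a 0‖^2 + (1 + (n:ℝ)^2) * ‖b 0‖^2) := by
        rw [Real.sqrt_mul (sq_nonneg _), Real.sqrt_sq (by linarith : (0:ℝ) ≤ 6*E)]
    _ = 6 * E * Real.sqrt (‖a 0‖^2 + (1 + (n:ℝ)^2) * ‖b 0‖^2) := by ring
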